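/- Assume S(0) ≥ 0, I(0) > 0, γ(t) ≥ 0, δ₁(t) ≥ 0, δ₂(t) ≥ 0 for all t ≥ 0, and that for every t ≥ 0 one has r(t) > 0 and d(t)/r(t) > S(t)/I(t) (equivalently d(t)·I(t) > r(t)·S(t); note I(t) > 0 for all t since I(0) > 0). Then N'(t) < 0 for all t ≥ 0, so the total population N is strictly decreasing on [0,∞) and N(t) ≤ N(0) for all t ≥ 0. -/

import Mathlib

private lemma cont_comp_max {f : ℝ → ℝ} (hf : ∀ t : ℝ, 0 ≤ t → ContinuousAt f t) :
    Continuous fun t => f (max t 0) := by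
  rw [continuous_iff_continuousAt]
  intro x
  have hm : ContinuousAt (fun t : ℝ => max t 0) x :=
    (continuous_id.max continuous_const).continuousAt
  exact ContinuousAt.comp (hf _ (le_max_right x 0)) hm

/-- Comparison for a linear ODE `g' = c g + b` with `b ≥ 0` on `[0,∞)`. -/
private lemma lin_ode_lower (c b g : ℝ → ℝ) (hc : Continuous c)
    (hg : ∀ t : ℝ, 0 ≤ t → HasDerivAt g (c t * g t + b t) t)
    (hb : ∀ t : ℝ, 0 ≤ t → 0 ≤ b t) :
    ∀ t : ℝ, 0 ≤ t → g 0 * Real.exp (∫ s in (0:ℝ)..t, c s) ≤ g t := by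
  set A : ℝ → ℝ := fun t => ∫ s in (0:ℝ)..t, c s with hA
  have hA' : ∀ t : ℝ, HasDerivAt A (c t) t := fun t =>
    (hc.integral_hasStrictDerivAt 0 t).hasDerivAt
  set h : ℝ → ℝ := fun t => g t * Real.exp (-(A t)) with hh
  have hh' : ∀ t : ℝ, 0 ≤ t → HasDerivAt h (b t * Real.exp (-(A t))) t := by
    intro t ht
    have h1 : HasDerivAt (fun u => Real.exp (-(A u))) (Real.exp (-(A t)) * (-(c t))) t := by
      have := (Real.hasDerivAt_exp (-(A t))).comp t ((hA' t).neg)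
      exact this
    have := (hg t ht).mul h1
    refine HasDerivAt.congr_deriv this ?_
    ring
  have hmono : MonotoneOn h (Set.Ici (0:ℝ)) := by
    apply monotoneOn_of_deriv_nonneg (convex_Ici 0)
    · intro x hx
      exact ((hh' x hx).continuousAt).continuousWithinAt
    · intro x hx
      rw [interior_Ici] at hx
      exact ((hh' x (le_of_lt hx)).differentiableAt).differentiableWithinAt
    · intro x hx
      rw [interior_Ici] at hx
      rw [(hh' x (le_of_lt hx)).deriv]
      exact mul_nonneg (hb x (le_of_lt hx)) (Real.exp_pos _).le
  intro t ht
  have h0 : h 0 ≤ h t := hmono (Set.self_mem_Ici) ht ht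
  have hA0 : A 0 = 0 := by simp [hA]
  have h0' : g 0 ≤ g t * Real.exp (-(A t)) := by
    simpa [hh, hA0] using h0
  have := mul_le_mul_of_nonneg_right h0' (Real.exp_pos (A t)).le
  calc g 0 * Real.exp (A t) ≤ g t * Real.exp (-(A t)) * Real.exp (A t) := this
    _ = g t := by rw [mul_assoc, ← Real.exp_add]; simp

theorem sis_total_population_strictly_decreasing
    (r d γ β δ1 δ2 p S I : ℝ → ℝ)
    (hrc : Continuous r) (hdc : Continuous d) (hγc : Continuous γ) (hβc : Continuous β)
    (hδ1c : Continuous δ1) (hδ2c : Continuous δ2) (hpc : Continuous p)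
    (hppos : ∀ t : ℝ, 0 ≤ t → 0 < p t)
    (hS : ∀ t : ℝ, 0 ≤ t →
      HasDerivAt S (r t * (1 - (δ1 t * S t + δ2 t * I t) / p t) * S t
        + (γ t - β t * S t) * I t) t)
    (hI : ∀ t : ℝ, 0 ≤ t → HasDerivAt I ((β t * S t - d t - γ t) * I t) t)
    (hS0 : 0 ≤ S 0) (hI0 : 0 < I 0)
    (hγpos : ∀ t : ℝ, 0 ≤ t → 0 ≤ γ t)
    (hδ1pos : ∀ t : ℝ, 0 ≤ t → 0 ≤ δ1 t) (hδ2pos : ∀ t : ℝ, 0 ≤ t → 0 ≤ δ2 t)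
    (hr : ∀ t : ℝ, 0 ≤ t → 0 < r t)
    (hdr : ∀ t : ℝ, 0 ≤ t → r t * S t < d t * I t) :
    (∀ t : ℝ, 0 ≤ t →
      r t * (1 - (δ1 t * S t + δ2 t * I t) / p t) * S t - d t * I t < 0) ∧
    StrictAntiOn (fun t => S t + I t) (Set.Ici (0:ℝ)) ∧
    (∀ t : ℝ, 0 ≤ t → S t + I t ≤ S 0 + I 0) := by
  -- globally continuous modifications
  have hScont : Continuous fun t => S (max t 0) :=
    cont_comp_max (fun t ht => (hS t ht).continuousAt)
  have hIcont : Continuous fun t => I (max t 0) :=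
    cont_comp_max (fun t ht => (hI t ht).continuousAt)
  have hpcont : Continuous fun t => p (max t 0) :=
    cont_comp_max (fun t _ => hpc.continuousAt)
  have hmax : ∀ t : ℝ, 0 ≤ t → max t 0 = t := fun t ht => max_eq_left ht
  -- positivity of I
  have hIpos : ∀ t : ℝ, 0 ≤ t → 0 < I t := by
    set c : ℝ → ℝ := fun t => β t * S (max t 0) - d t - γ t with hcdef
    have hcc : Continuous c := ((hβc.mul hScont).sub hdc).sub hγc
    have key := lin_ode_lower c (fun _ => 0) I hcc
      (fun t ht => by
        have := hI t ht
        rw [hcdef]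
        simpa [hmax t ht] using this.congr_deriv (by ring))
      (fun t _ => le_refl 0)
    intro t ht
    exact lt_of_lt_of_le (mul_pos hI0 (Real.exp_pos _)) (key t ht)
  -- nonnegativity of S
  have hSpos : ∀ t : ℝ, 0 ≤ t → 0 ≤ S t := by
    set c : ℝ → ℝ := fun t =>
      r t * (1 - (δ1 t * S (max t 0) + δ2 t * I (max t 0)) / p (max t 0))
        - β t * I (max t 0) with hcdef
    have hcc : Continuous c := by
      apply Continuous.sub
      · apply hrc.mul
        apply Continuous.sub continuous_const
        apply Continuous.div ((hδ1c.mul hScont).add (hδ2c.mul hIcont)) hpcont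
        intro x
        exact (hppos _ (le_max_right x 0)).ne'
      · exact hβc.mul hIcont
    have key := lin_ode_lower c (fun t => γ t * I t) S hcc
      (fun t ht => by
        have := hS t ht
        rw [hcdef]
        simp only [hmax t ht]
        exact this.congr_deriv (by ring))
      (fun t ht => mul_nonneg (hγpos t ht) (hIpos t ht).le)
    intro t ht
    exact le_trans (mul_nonneg hS0 (Real.exp_pos _).le) (key t ht)
  -- derivative of N is negative
  have hNneg : ∀ t : ℝ, 0 ≤ t →
      r t * (1 - (δ1 t * S t + δ2 t * I t) / p t) * S t - d t * I t < 0 := by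
    intro t ht
    have hG : 0 ≤ (δ1 t * S t + δ2 t * I t) / p t :=
      div_nonneg (add_nonneg (mul_nonneg (hδ1pos t ht) (hSpos t ht))
        (mul_nonneg (hδ2pos t ht) (hIpos t ht).le)) (hppos t ht).le
    have h1 : r t * (1 - (δ1 t * S t + δ2 t * I t) / p t) * S t ≤ r t * S t := by
      have : r t * (1 - (δ1 t * S t + δ2 t * I t) / p t) ≤ r t * 1 :=
        mul_le_mul_of_nonneg_left (by linarith) (hr t ht).le
      calc r t * (1 - (δ1 t * S t + δ2 t * I t) / p t) * S t
          ≤ r t * 1 * S t := mul_le_mul_of_nonneg_right this (hSpos t ht)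
        _ = r t * S t := by ring
    linarith [hdr t ht]
  -- derivative of N
  have hN : ∀ t : ℝ, 0 ≤ t → HasDerivAt (fun t => S t + I t)
      (r t * (1 - (δ1 t * S t + δ2 t * I t) / p t) * S t - d t * I t) t := by
    intro t ht
    exact ((hS t ht).add (hI t ht)).congr_deriv (by ring)
  have hanti : StrictAntiOn (fun t => S t + I t) (Set.Ici (0:ℝ)) := by
    apply strictAntiOn_of_deriv_neg (convex_Ici 0)
    · intro x hx
      exact ((hN x hx).continuousAt).continuousWithinAt
    · intro x hx
      rw [interior_Ici] at hx
      rw [(hN x hx.le).deriv]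
      exact hNneg x hx.le
  refine ⟨hNneg, hanti, fun t ht => ?_⟩
  rcases eq_or_lt_of_le ht with h | h
  · rw [← h]
  · exact (hanti Set.self_mem_Ici ht h).le
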